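/- Let I = [a,b] be a closed finite interval and let {f_i : I → I | i ∈ Λ} be a family of length-decreasing functions (i.e. |f_i(J)| < |J| for every nonempty subinterval J ⊆ I) such that for each i the maximum and minimum values of f_i on I occur at the endpoints of I, and such that the union of the images ⋃_i Im(f_i) = I. Then the orbit of every x ∈ I under the semigroup generated by the f_i is dense in I. -/

import Mathlib

open Set Filter Topology

private lemma edelstein_tendsto {a b : ℝ} (g : ℝ → ℝ)
    (hlip : ∀ u ∈ Set.Icc a b, ∀ v ∈ Set.Icc a b, dist (g u) (g v) ≤ dist u v)
    (hcon : ∀ u ∈ Set.Icc a b, ∀ v ∈ Set.Icc a b, u ≠ v → dist (g u) (g v) < dist u v)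
    (hg : Set.MapsTo g (Set.Icc a b) (Set.Icc a b))
    {e : ℝ} (he : e ∈ Set.Icc a b) (hfix : g e = e)
    {x : ℝ} (hx : x ∈ Set.Icc a b) :
    Filter.Tendsto (fun n => g^[n] x) Filter.atTop (nhds e) := by
  set z : ℕ → ℝ := fun n => g^[n] x with hz
  have hzmem : ∀ n, z n ∈ Set.Icc a b := by
    intro n; induction n with
    | zero => exact hx
    | succ n ih => simpa [hz, Function.iterate_succ_apply'] using hg ih
  have hzsucc : ∀ n, z (n+1) = g (z n) := by
    intro n; simp [hz, Function.iterate_succ_apply']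
  set d : ℕ → ℝ := fun n => dist (z n) e with hd
  have hdanti : Antitone d := by
    apply antitone_nat_of_succ_le
    intro n
    have : d (n+1) = dist (g (z n)) (g e) := by rw [hd]; simp [hzsucc, hfix]
    rw [this]
    exact hlip _ (hzmem n) _ he
  have hbdd : BddBelow (Set.range d) := ⟨0, by rintro _ ⟨n, rfl⟩; exact dist_nonneg⟩
  have hL : Filter.Tendsto d Filter.atTop (nhds (⨅ n, d n)) :=
    tendsto_atTop_ciInf hdanti hbdd
  set L := ⨅ n, d n with hLdef
  have hLzero : L = 0 := by
    by_contra hne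
    obtain ⟨w, hw, φ, hφ, hwt⟩ := isCompact_Icc.tendsto_subseq hzmem
    have h1 : Filter.Tendsto (fun k => d (φ k)) Filter.atTop (nhds L) :=
      hL.comp hφ.tendsto_atTop
    have h2 : Filter.Tendsto (fun k => d (φ k)) Filter.atTop (nhds (dist w e)) :=
      hwt.dist tendsto_const_nhds
    have hdw : dist w e = L := tendsto_nhds_unique h2 h1
    have hwe : w ≠ e := by
      intro h; rw [h, dist_self] at hdw; exact hne hdw.symm
    have h3 : Filter.Tendsto (fun k => z (φ k + 1)) Filter.atTop (nhds (g w)) := by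
      have hb : ∀ k, dist (z (φ k + 1)) (g w) ≤ dist (z (φ k)) w := by
        intro k; rw [hzsucc]; exact hlip _ (hzmem _) _ hw
      refine tendsto_iff_dist_tendsto_zero.mpr ?_
      exact squeeze_zero (fun k => dist_nonneg) hb (tendsto_iff_dist_tendsto_zero.mp hwt)
    have h4 : Filter.Tendsto (fun k => d (φ k + 1)) Filter.atTop (nhds (dist (g w) e)) :=
      h3.dist tendsto_const_nhds
    have h5 : Filter.Tendsto (fun k => d (φ k + 1)) Filter.atTop (nhds L) :=
      hL.comp ((Filter.tendsto_add_atTop_nat 1).comp hφ.tendsto_atTop)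
    have h6 : dist (g w) e = L := tendsto_nhds_unique h4 h5
    have h7 : dist (g w) e < L := by
      have h := hcon _ hw _ he hwe
      rw [hfix, hdw] at h; exact h
    rw [h6] at h7; exact lt_irrefl _ h7
  have hd0 : Filter.Tendsto d Filter.atTop (nhds 0) := hLzero ▸ hL
  exact tendsto_iff_dist_tendsto_zero.mpr hd0

/-- family of length-decreasing maps on [a,b] with extrema at endpoints
whose images cover [a,b] has all semigroup orbits dense. -/
theorem stmt_0 {Λ : Type*} (a b : ℝ) (hab : a < b) (f : Λ → ℝ → ℝ)
    (hmaps : ∀ i, Set.MapsTo (f i) (Set.Icc a b) (Set.Icc a b))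
    (hdec : ∀ i c d, a ≤ c → c < d → d ≤ b →
      Metric.diam (f i '' Set.Icc c d) < d - c)
    (hend : ∀ i, ∀ x ∈ Set.Icc a b,
      min (f i a) (f i b) ≤ f i x ∧ f i x ≤ max (f i a) (f i b))
    (hunion : (⋃ i, f i '' Set.Icc a b) = Set.Icc a b) :
    ∀ x ∈ Set.Icc a b, Set.Icc a b ⊆
      closure {y | ∃ w : List Λ, w ≠ [] ∧ y = w.foldr (fun i z => f i z) x} := by
  intro x hx
  set O : Set ℝ := {y | ∃ w : List Λ, w ≠ [] ∧ y = w.foldr (fun i z => f i z) x} with hOdef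
  -- pairwise strict contraction
  have key : ∀ (i : Λ), ∀ u ∈ Set.Icc a b, ∀ v ∈ Set.Icc a b, u ≠ v →
      dist (f i u) (f i v) < dist u v := by
    have main : ∀ (i : Λ), ∀ u ∈ Set.Icc a b, ∀ v ∈ Set.Icc a b, u < v →
        dist (f i u) (f i v) < dist u v := by
      intro i u hu v hv hlt
      have hsub : f i '' Set.Icc u v ⊆ Set.Icc a b :=
        (Set.image_mono (Set.Icc_subset_Icc hu.1 hv.2)).trans (hmaps i).image_subset
      have hbd : Bornology.IsBounded (f i '' Set.Icc u v) :=
        (Metric.isBounded_Icc a b).subset hsub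
      have h1 : dist (f i u) (f i v) ≤ Metric.diam (f i '' Set.Icc u v) :=
        Metric.dist_le_diam_of_mem hbd ⟨u, Set.left_mem_Icc.2 hlt.le, rfl⟩
          ⟨v, Set.right_mem_Icc.2 hlt.le, rfl⟩
      have h2 := hdec i u v hu.1 hlt hv.2
      have hduv : dist u v = v - u := by
        rw [Real.dist_eq, abs_of_nonpos (by linarith)]; ring
      rw [hduv]; exact lt_of_le_of_lt h1 h2
    intro i u hu v hv huv
    rcases lt_or_gt_of_ne huv with h | h
    · exact main i u hu v hv h
    · rw [dist_comm, dist_comm u v]; exact main i v hv u hu h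
  have keyle : ∀ (i : Λ), ∀ u ∈ Set.Icc a b, ∀ v ∈ Set.Icc a b,
      dist (f i u) (f i v) ≤ dist u v := by
    intro i u hu v hv
    rcases eq_or_ne u v with rfl | h
    · simp
    · exact (key i u hu v hv h).le
  have hOsubIcc : O ⊆ Set.Icc a b := by
    rintro y ⟨w, hw, rfl⟩
    clear hw
    induction w with
    | nil => exact hx
    | cons i w ih => exact hmaps i ih
  set Q : Set ℝ := closure O with hQdef
  have hQIcc : Q ⊆ Set.Icc a b := closure_minimal hOsubIcc isClosed_Icc
  have hQclosed : IsClosed Q := isClosed_closure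
  have hInv : ∀ i, ∀ q ∈ Q, f i q ∈ Q := by
    intro i q hq
    obtain ⟨u, huO, hut⟩ := mem_closure_iff_seq_limit.mp hq
    have hfu : ∀ n, f i (u n) ∈ O := by
      intro n
      obtain ⟨w, hw, hwe⟩ := huO n
      exact ⟨i :: w, by simp, by simp [List.foldr, ← hwe]⟩
    have ht : Filter.Tendsto (fun n => f i (u n)) Filter.atTop (nhds (f i q)) := by
      refine tendsto_iff_dist_tendsto_zero.mpr ?_
      exact squeeze_zero (fun n => dist_nonneg)
        (fun n => keyle i (u n) (hOsubIcc (huO n)) q (hQIcc hq))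
        (tendsto_iff_dist_tendsto_zero.mp hut)
    exact mem_closure_of_tendsto ht (Filter.Eventually.of_forall hfu)
  -- fixed points of words lie in Q
  have hfixQ : ∀ (g : ℝ → ℝ) (u : List Λ), u ≠ [] →
      (∀ z, g z = u.foldr (fun i z => f i z) z) →
      Set.MapsTo g (Set.Icc a b) (Set.Icc a b) →
      (∀ p ∈ Set.Icc a b, ∀ q ∈ Set.Icc a b, dist (g p) (g q) ≤ dist p q) →
      (∀ p ∈ Set.Icc a b, ∀ q ∈ Set.Icc a b, p ≠ q → dist (g p) (g q) < dist p q) →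
      ∀ e ∈ Set.Icc a b, g e = e → e ∈ Q := by
    intro g u hu hgu hgmaps hglip hgcon e he hfix
    have hiter : ∀ n, g^[n+1] x ∈ O := by
      intro n
      induction n with
      | zero => exact ⟨u, hu, by simpa using hgu x⟩
      | succ n ih =>
        obtain ⟨w, hw, hwe⟩ := ih
        refine ⟨u ++ w, by simp [hu], ?_⟩
        rw [List.foldr_append, ← hwe, Function.iterate_succ_apply', hgu]
    have htend : Filter.Tendsto (fun n : ℕ => g^[n+1] x) Filter.atTop (nhds e) := by
      have h0 := edelstein_tendsto g hglip hgcon hgmaps he hfix hx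
      exact h0.comp (Filter.tendsto_add_atTop_nat 1)
    exact mem_closure_of_tendsto htend (Filter.Eventually.of_forall hiter)
  have haI : a ∈ Set.Icc a b := ⟨le_refl a, hab.le⟩
  have hbI : b ∈ Set.Icc a b := ⟨hab.le, le_refl b⟩
  have hcover : ∀ y ∈ Set.Icc a b, ∃ i, ∃ u ∈ Set.Icc a b, f i u = y := by
    intro y hy
    rw [← hunion] at hy
    obtain ⟨i, u, hu, hfu⟩ := Set.mem_iUnion.mp hy
    exact ⟨i, u, hu, hfu⟩
  -- a and b are in Q
  obtain ⟨i₀, u₀, hu₀, hfu₀⟩ := hcover b hbI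
  have hbmax : f i₀ a = b ∨ f i₀ b = b := by
    have h1 : b ≤ max (f i₀ a) (f i₀ b) := hfu₀ ▸ (hend i₀ u₀ hu₀).2
    have h2 : f i₀ a ≤ b := (hmaps i₀ haI).2
    have h3 : f i₀ b ≤ b := (hmaps i₀ hbI).2
    rcases max_cases (f i₀ a) (f i₀ b) with ⟨hm, _⟩ | ⟨hm, _⟩
    · left; exact le_antisymm h2 (hm ▸ h1)
    · right; exact le_antisymm h3 (hm ▸ h1)
  obtain ⟨j₀, v₀, hv₀, hfv₀⟩ := hcover a haI
  have hamin : f j₀ a = a ∨ f j₀ b = a := by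
    have h1 : min (f j₀ a) (f j₀ b) ≤ a := hfv₀ ▸ (hend j₀ v₀ hv₀).1
    have h2 : a ≤ f j₀ a := (hmaps j₀ haI).1
    have h3 : a ≤ f j₀ b := (hmaps j₀ hbI).1
    rcases min_cases (f j₀ a) (f j₀ b) with ⟨hm, _⟩ | ⟨hm, _⟩
    · left; exact le_antisymm (hm ▸ h1) h2
    · right; exact le_antisymm (hm ▸ h1) h3
  have hcomplip : ∀ p ∈ Set.Icc a b, ∀ q ∈ Set.Icc a b,
      dist (f i₀ (f j₀ p)) (f i₀ (f j₀ q)) ≤ dist p q := fun p hp q hq =>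
    (keyle i₀ _ (hmaps j₀ hp) _ (hmaps j₀ hq)).trans (keyle j₀ p hp q hq)
  have hcompcon : ∀ p ∈ Set.Icc a b, ∀ q ∈ Set.Icc a b, p ≠ q →
      dist (f i₀ (f j₀ p)) (f i₀ (f j₀ q)) < dist p q := fun p hp q hq hpq =>
    (keyle i₀ _ (hmaps j₀ hp) _ (hmaps j₀ hq)).trans_lt (key j₀ p hp q hq hpq)
  have habQ : a ∈ Q ∧ b ∈ Q := by
    rcases hbmax with hb1 | hb2
    · rcases hamin with ha1 | ha2
      · have haQ : a ∈ Q := hfixQ (f j₀) [j₀] (by simp) (fun z => rfl) (hmaps j₀)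
          (keyle j₀) (key j₀) a haI ha1
        exact ⟨haQ, by rw [← hb1]; exact hInv i₀ a haQ⟩
      · have hgb : (fun z => f i₀ (f j₀ z)) b = b := by simp only []; rw [ha2, hb1]
        have hbQ : b ∈ Q := hfixQ (fun z => f i₀ (f j₀ z)) [i₀, j₀] (by simp) (fun z => rfl)
          ((hmaps i₀).comp (hmaps j₀)) hcomplip hcompcon b hbI hgb
        exact ⟨by rw [← ha2]; exact hInv j₀ b hbQ, hbQ⟩
    · have hbQ : b ∈ Q := hfixQ (f i₀) [i₀] (by simp) (fun z => rfl) (hmaps i₀)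
        (keyle i₀) (key i₀) b hbI hb2
      rcases hamin with ha1 | ha2
      · have haQ : a ∈ Q := hfixQ (f j₀) [j₀] (by simp) (fun z => rfl) (hmaps j₀)
          (keyle j₀) (key j₀) a haI ha1
        exact ⟨haQ, hbQ⟩
      · exact ⟨by rw [← ha2]; exact hInv j₀ b hbQ, hbQ⟩
  -- gap construction
  have gapAt : ∀ t ∈ Set.Icc a b, t ∉ Q → ∃ γ δ, γ ∈ Q ∧ δ ∈ Q ∧ γ < t ∧ t < δ ∧
      ∀ q ∈ Q, q ≤ γ ∨ δ ≤ q := by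
    intro t ht htQ
    have hAne : (Q ∩ Set.Icc a t).Nonempty := ⟨a, habQ.1, le_refl a, ht.1⟩
    have hAbdd : BddAbove (Q ∩ Set.Icc a t) := ⟨t, fun q hq => hq.2.2⟩
    have hγA : sSup (Q ∩ Set.Icc a t) ∈ Q ∩ Set.Icc a t :=
      (hQclosed.inter isClosed_Icc).csSup_mem hAne hAbdd
    have hBne : (Q ∩ Set.Icc t b).Nonempty := ⟨b, habQ.2, ht.2, le_refl b⟩
    have hBbdd : BddBelow (Q ∩ Set.Icc t b) := ⟨t, fun q hq => hq.2.1⟩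
    have hδB : sInf (Q ∩ Set.Icc t b) ∈ Q ∩ Set.Icc t b :=
      (hQclosed.inter isClosed_Icc).csInf_mem hBne hBbdd
    refine ⟨sSup (Q ∩ Set.Icc a t), sInf (Q ∩ Set.Icc t b), hγA.1, hδB.1,
      lt_of_le_of_ne hγA.2.2 (fun h => htQ (h ▸ hγA.1)), ?_, ?_⟩
    · exact lt_of_le_of_ne hδB.2.1 (fun h => htQ (by rw [h]; exact hδB.1))
    · intro q hq
      rcases le_or_gt q t with h | h
      · exact Or.inl (le_csSup hAbdd ⟨hq, (hQIcc hq).1, h⟩)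
      · exact Or.inr (csInf_le hBbdd ⟨hq, h.le, (hQIcc hq).2⟩)
  -- main density claim
  intro y hy
  by_contra hyQ
  obtain ⟨γ₀, δ₀, hγ₀Q, hδ₀Q, hγ₀y, hyδ₀, hgap₀⟩ := gapAt y hy hyQ
  set θ := δ₀ - γ₀ with hθ
  have hθpos : 0 < θ := by simp only [hθ]; linarith
  set S : Set (ℝ × ℝ) := {p | p.1 ∈ Q ∧ p.2 ∈ Q ∧ p.1 < p.2 ∧
      (∀ q ∈ Q, q ≤ p.1 ∨ p.2 ≤ q) ∧ θ ≤ p.2 - p.1} with hS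
  have hSfin : S.Finite := by
    have hkey : ∀ p ∈ S, ∀ q ∈ S, p.1 ≤ q.1 → q.1 - p.1 < θ → p = q := by
      intro p hp q hq hle hlt
      have h1 : q.1 ≤ p.1 ∨ p.2 ≤ q.1 := hp.2.2.2.1 q.1 hq.1
      have hq1p2 : q.1 < p.2 := by have := hp.2.2.2.2; linarith
      have he1 : p.1 = q.1 := le_antisymm hle (h1.resolve_right (by linarith))
      have h2 : p.2 ≤ q.1 ∨ q.2 ≤ p.2 := hq.2.2.2.1 p.2 hp.2.1
      have h2' : q.2 ≤ p.2 := h2.resolve_left (by linarith [hp.2.2.1])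
      have h3 : q.2 ≤ p.1 ∨ p.2 ≤ q.2 := hp.2.2.2.1 q.2 hq.2.1
      have h3' : p.2 ≤ q.2 := h3.resolve_left (by linarith [hq.2.2.1])
      exact Prod.ext he1 (le_antisymm h3' h2')
    have hinj : Set.InjOn (fun p : ℝ × ℝ => ⌊p.1 / θ⌋) S := by
      intro p hp q hq hfl
      simp only at hfl
      have habs : ∀ s t : ℝ, ⌊s / θ⌋ = ⌊t / θ⌋ → s - t < θ := by
        intro s t hst
        have h1 : s / θ < ⌊s / θ⌋ + 1 := Int.lt_floor_add_one _
        have h2 : (⌊t / θ⌋ : ℝ) ≤ t / θ := Int.floor_le _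
        rw [hst] at h1
        have h3 : s / θ - t / θ < 1 := by linarith
        have h4 : (s - t) / θ < 1 := by rw [sub_div]; exact h3
        calc s - t = (s - t) / θ * θ := by field_simp
        _ < 1 * θ := by exact mul_lt_mul_of_pos_right h4 hθpos
        _ = θ := one_mul θ
      rcases le_total p.1 q.1 with h | h
      · exact hkey p hp q hq h (habs q.1 p.1 hfl.symm)
      · exact (hkey q hq p hp h (habs p.1 q.1 hfl)).symm
    have himg : (fun p : ℝ × ℝ => ⌊p.1 / θ⌋) '' S ⊆ Set.Icc ⌊a/θ⌋ ⌊b/θ⌋ := by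
      rintro _ ⟨p, hp, rfl⟩
      have hp1 : p.1 ∈ Set.Icc a b := hQIcc hp.1
      constructor
      · exact Int.floor_le_floor (by exact div_le_div_of_nonneg_right hp1.1 hθpos.le)
      · exact Int.floor_le_floor (by exact div_le_div_of_nonneg_right hp1.2 hθpos.le)
    exact Set.Finite.of_finite_image ((Set.finite_Icc _ _).subset himg) hinj
  have hSne : S.Nonempty := ⟨(γ₀, δ₀), hγ₀Q, hδ₀Q, lt_trans hγ₀y hyδ₀, hgap₀, le_refl θ⟩
  obtain ⟨P, hPS, hPmax⟩ := Set.exists_max_image S (fun p => p.2 - p.1) hSfin hSne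
  obtain ⟨hP1Q, hP2Q, hPlt, hPgap, hPθ⟩ := hPS
  set m := (P.1 + P.2) / 2 with hm
  have hm1 : P.1 < m := by simp only [hm]; linarith
  have hm2 : m < P.2 := by simp only [hm]; linarith
  have hmIcc : m ∈ Set.Icc a b := ⟨(hQIcc hP1Q).1.trans hm1.le, hm2.le.trans (hQIcc hP2Q).2⟩
  have hmQ : m ∉ Q := by
    intro hmem
    rcases hPgap m hmem with h | h
    · linarith
    · linarith
  obtain ⟨i, u, hu, hfu⟩ := hcover m hmIcc
  have huQ : u ∉ Q := fun h => hmQ (hfu ▸ hInv i u h)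
  obtain ⟨γ, δ, hγQ, hδQ, hγu, huδ, hgap'⟩ := gapAt u hu huQ
  have hfγQ : f i γ ∈ Q := hInv i γ hγQ
  have hfδQ : f i δ ∈ Q := hInv i δ hδQ
  have hfγpos : f i γ ≤ P.1 ∨ P.2 ≤ f i γ := hPgap _ hfγQ
  have hfδpos : f i δ ≤ P.1 ∨ P.2 ≤ f i δ := hPgap _ hfδQ
  have c1 : |f i γ - m| < u - γ := by
    have h := key i γ (hQIcc hγQ) u hu (ne_of_lt hγu)
    have hd : dist γ u = u - γ := by
      rw [Real.dist_eq, abs_of_nonpos (by linarith)]; ring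
    rw [hfu, hd, Real.dist_eq] at h
    exact h
  have c2 : |f i δ - m| < δ - u := by
    have h := key i δ (hQIcc hδQ) u hu (ne_of_gt huδ)
    have hd : dist δ u = δ - u := by
      rw [Real.dist_eq, abs_of_nonneg (by linarith)]
    rw [hfu, hd, Real.dist_eq] at h
    exact h
  obtain ⟨c1a, c1b⟩ := abs_lt.mp c1
  obtain ⟨c2a, c2b⟩ := abs_lt.mp c2
  have hlen : P.2 - P.1 < δ - γ := by
    rcases hfγpos with h1 | h1 <;> rcases hfδpos with h2 | h2 <;>
      simp only [hm] at hm1 hm2 c1a c1b c2a c2b <;> linarith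
  have hnew : (γ, δ) ∈ S := ⟨hγQ, hδQ, lt_trans hγu huδ, hgap', by linarith⟩
  have := hPmax (γ, δ) hnew
  simp only at this
  linarith
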